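/- Let R be a finite set and Q : Fin m → Finset R a family of m subsets of R whose union is all of R, with 1 ≤ k' ≤ m. Then the minimum, over subfamilies of k' of the sets Q_i, of the cardinality of their union equals the least natural number a such that there exists a subset R' ⊆ R with |R'| = a that contains (covers) at least k' of the sets Q_i. (Correctness of the reduction from k-element cover to minimum k-set coverage, Theorem 1.) -/
import Mathlib


/-- Theorem 1 (correctness of the reduction): the minimum k'-set coverage value,
i.e. the minimum over subfamilies of k' of the sets `Q i` of the cardinality of
their union, is the least natural number `a` such that there exists a subset
`R' ⊆ R` with `|R'| = a` covering (containing) at least `k'` of the sets `Q i`. -/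
theorem stmt_0 {α : Type*} [DecidableEq α] {m : ℕ} (R : Finset α)
    (Q : Fin m → Finset α)
    (hUnion : Finset.univ.biUnion Q = R)
    (k' : ℕ) (hk1 : 1 ≤ k') (hk2 : k' ≤ m) :
    IsLeast {a : ℕ | ∃ R' ⊆ R, R'.card = a ∧
        k' ≤ (Finset.univ.filter (fun i => Q i ⊆ R')).card}
      (sInf {a : ℕ | ∃ s : Finset (Fin m), s.card = k' ∧ (s.biUnion Q).card = a}) := by
  set A := {a : ℕ | ∃ s : Finset (Fin m), s.card = k' ∧ (s.biUnion Q).card = a} with hA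
  have hAne : A.Nonempty := by
    obtain ⟨s, hs⟩ := Finset.exists_subset_card_eq (by simpa using hk2 :
      k' ≤ (Finset.univ : Finset (Fin m)).card)
    exact ⟨(s.biUnion Q).card, s, hs.2, rfl⟩
  have hmem : sInf A ∈ A := Nat.sInf_mem hAne
  obtain ⟨s₀, hs₀card, hs₀⟩ := hmem
  constructor
  · refine ⟨s₀.biUnion Q, ?_, hs₀, ?_⟩
    · rw [← hUnion]; exact Finset.biUnion_subset_biUnion_of_subset_left Q (Finset.subset_univ s₀)
    · calc k' = s₀.card := hs₀card.symm
        _ ≤ _ := Finset.card_le_card (fun i hi => by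
            simp only [Finset.mem_filter, Finset.mem_univ, true_and]
            exact Finset.subset_biUnion_of_mem Q hi)
  · rintro a ⟨R', hR'R, hR'card, hcov⟩
    obtain ⟨s, hssub, hscard⟩ := Finset.exists_subset_card_eq hcov
    have : (s.biUnion Q).card ∈ A := ⟨s, hscard, rfl⟩
    calc sInf A ≤ (s.biUnion Q).card := Nat.sInf_le this
      _ ≤ R'.card := Finset.card_le_card (Finset.biUnion_subset.2 fun i hi => by
          have := hssub hi
          simp only [Finset.mem_filter] at this
          exact this.2)
      _ = a := hR'card
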